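/- Let δ = 1, h₀, h₁ > 0, and |x₁ - x₀| < π. With τ = tan((x₁-x₀)/2), A = h₀ + h₁ - 2√(h₀h₁/(1+τ²)), B = h₀ - √(h₀h₁/(1+τ²)), and ω₀ = 2τ√(h₀h₁/(1+τ²)), the function h(t) = At² - 2Bt + h₀ is strictly positive on [0,1], satisfies h(1) = h₁, and satisfies the ODE 2h''(t)h(t) - h'(t)² = ω₀². -/

import Mathlib

/-- Travelling-Dirac mass profile (δ = 1): with `τ = tan((x₁-x₀)/2)`,
`A = h₀+h₁-2√(h₀h₁/(1+τ²))`, `B = h₀-√(h₀h₁/(1+τ²))`, `ω₀ = 2τ√(h₀h₁/(1+τ²))`,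
the function `h(t) = At² - 2Bt + h₀` is positive on `[0,1]`, satisfies `h(1) = h₁`,
and solves `2h''h - (h')² = ω₀²` (with `h'(t) = 2At - 2B` and `h'' = 2A`). -/
theorem travelling_dirac_mass (h₀ h₁ x₀ x₁ : ℝ) (hh₀ : 0 < h₀) (hh₁ : 0 < h₁)
    (hx : |x₁ - x₀| < Real.pi) :
    let τ := Real.tan ((x₁ - x₀) / 2)
    let A := h₀ + h₁ - 2 * Real.sqrt (h₀ * h₁ / (1 + τ ^ 2))
    let B := h₀ - Real.sqrt (h₀ * h₁ / (1 + τ ^ 2))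
    let ω₀ := 2 * τ * Real.sqrt (h₀ * h₁ / (1 + τ ^ 2))
    let h := fun t : ℝ => A * t ^ 2 - 2 * B * t + h₀
    (∀ t ∈ Set.Icc (0 : ℝ) 1, 0 < h t) ∧ h 1 = h₁ ∧
      (∀ t : ℝ, HasDerivAt h (2 * A * t - 2 * B) t ∧
        HasDerivAt (fun s : ℝ => 2 * A * s - 2 * B) (2 * A) t ∧
        2 * (2 * A) * h t - (2 * A * t - 2 * B) ^ 2 = ω₀ ^ 2) := by
  intro τ A B ω₀ h
  set s := Real.sqrt (h₀ * h₁ / (1 + τ ^ 2)) with hs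
  have hτpos : (0:ℝ) < 1 + τ ^ 2 := by positivity
  have hnn : (0:ℝ) ≤ h₀ * h₁ / (1 + τ ^ 2) := by positivity
  have hs_nonneg : 0 ≤ s := Real.sqrt_nonneg _
  have hs_sq : s ^ 2 = h₀ * h₁ / (1 + τ ^ 2) := Real.sq_sqrt hnn
  refine ⟨?_, ?_, ?_⟩
  · intro t ht
    obtain ⟨ht0, ht1⟩ := ht
    have key : h t = h₀ * (1 - t) ^ 2 + h₁ * t ^ 2 + 2 * s * (t * (1 - t)) := by
      simp only [h, A, B]; ring
    rw [key]
    rcases eq_or_lt_of_le ht0 with h0 | h0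
    · have : t = 0 := h0.symm
      subst this; simpa using hh₀
    · have : 0 < h₁ * t ^ 2 := by positivity
      have h2 : 0 ≤ h₀ * (1 - t) ^ 2 := by positivity
      have h3 : 0 ≤ 2 * s * (t * (1 - t)) := by
        have : 0 ≤ t * (1 - t) := mul_nonneg ht0 (by linarith)
        positivity
      linarith
  · simp only [h, A, B]; ring
  · intro t
    refine ⟨?_, ?_, ?_⟩
    · have H := (((hasDerivAt_pow 2 t).const_mul A).sub
        ((hasDerivAt_id t).const_mul (2 * B))).add_const h₀
      convert H using 1
      · rfl
      · rfl
      norm_num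
      ring
      norm_num
      ring
    · have : HasDerivAt (fun u : ℝ => 2 * A * u - 2 * B) (2 * A * 1) t :=
        ((hasDerivAt_id t).const_mul (2 * A)).sub_const (2 * B)
      simpa using this
    · have key : 2 * (2 * A) * h t - (2 * A * t - 2 * B) ^ 2
          = 4 * (A * h₀ - B ^ 2) := by
        simp only [h]; ring
      have hAB : A * h₀ - B ^ 2 = h₀ * h₁ - s ^ 2 := by
        simp only [A, B]; ring
      have hω : ω₀ ^ 2 = 4 * τ ^ 2 * s ^ 2 := by simp only [ω₀]; ring
      rw [key, hAB, hω, hs_sq]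
      field_simp
      ring
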